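/- Let (b,a) = Pair(m',n',Λ,δ) be a combinatorially stable pair with respect to e, and suppose δ_i > 0 for some i > 1. Let δ'' = (δ_1 + 1, δ_2, …, δ_{i−1}, δ_i − 1, δ_{i+1}, …, δ_r) and let (b'',a'') = Pair(m',n',Λ,δ''). Then the triple (b'',e,a'') satisfies the realizability criterion, and a'' > a in the balancedness partial order. -/

import Mathlib

open Finset

/-- Degree of a 1-based integer tuple of rank `n`. -/
def degT (a : ℕ → ℤ) (n : ℕ) : ℤ := ∑ i ∈ Icc 1 n, a i

/-- `a` is weakly increasing on indices `1, …, n` (a splitting type of rank `n`). -/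
def Incr (a : ℕ → ℤ) (n : ℕ) : Prop := ∀ i j : ℕ, 1 ≤ i → i ≤ j → j ≤ n → a i ≤ a j

/-- `S(μ,ν) = Σ_{i=ν}^n a_i + Σ_{i=μ}^m b_i − Σ_{i=μ+ν−1}^{m+n} e_i`. -/
def Sfun (b e a : ℕ → ℤ) (m n μ ν : ℕ) : ℤ :=
  (∑ i ∈ Icc ν n, a i) + (∑ i ∈ Icc μ m, b i) - ∑ i ∈ Icc (μ + ν - 1) (m + n), e i

/-- `A(μ,ν) = a_ν − e_{μ+ν}`. -/
def Afun (e a : ℕ → ℤ) (μ ν : ℕ) : ℤ := a ν - e (μ + ν)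

/-- `B(μ,ν) = e_{μ+ν−1} − b_μ`. -/
def Bfun (b e : ℕ → ℤ) (μ ν : ℕ) : ℤ := e (μ + ν - 1) - b μ

/-- `h_μ = min{ν : 1 ≤ ν ≤ n+1, S(μ,ν') < 0 for all ν' with ν < ν' ≤ n+1}`. -/
noncomputable def hfun (b e a : ℕ → ℤ) (m n μ : ℕ) : ℕ :=
  sInf {ν : ℕ | 1 ≤ ν ∧ ν ≤ n + 1 ∧ ∀ ν', ν < ν' → ν' ≤ n + 1 → Sfun b e a m n μ ν' < 0}

/-- Weak eligibility of a triple `(b,e,a)` of ranks `m, m+n, n`. -/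
def WeaklyEligible (b e a : ℕ → ℤ) (m n : ℕ) : Prop :=
  degT a n + degT b m = degT e (m + n) ∧
  (∀ i, 1 ≤ i → i ≤ n → e i ≤ a i) ∧
  (∀ i, 1 ≤ i → i ≤ m → b i ≤ e (n + i))

/-- The realizability criterion: weakly eligible, and `A(μ,ν) ≥ 0`, `B(μ,ν) ≥ 0`
whenever `1 ≤ μ ≤ m`, `1 ≤ ν ≤ n` and `ν ≥ h_μ`. -/
def RealizCrit (b e a : ℕ → ℤ) (m n : ℕ) : Prop :=
  WeaklyEligible b e a m n ∧
  ∀ μ ν, 1 ≤ μ → μ ≤ m → 1 ≤ ν → ν ≤ n → hfun b e a m n μ ≤ ν →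
    0 ≤ Afun e a μ ν ∧ 0 ≤ Bfun b e μ ν

/-- `f ≥ g` in the balancedness partial order (for tuples of rank `n`):
all prefix sums of `f` dominate those of `g`. -/
def MoreBal (f g : ℕ → ℤ) (n : ℕ) : Prop :=
  ∀ k, k ≤ n → (∑ i ∈ Icc 1 k, g i) ≤ ∑ i ∈ Icc 1 k, f i

/-- `f > g` in the balancedness partial order: `f ≥ g` and `f ≠ g` (on indices `1..n`). -/
def StrictMoreBal (f g : ℕ → ℤ) (n : ℕ) : Prop :=
  MoreBal f g n ∧ ∃ i, 1 ≤ i ∧ i ≤ n ∧ f i ≠ g i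

/-- `hom(u,v) = Σ_i Σ_j max(0, v_j − u_i + 1)`, the dimension of
`Hom(O(u), O(v))` on `P¹`. -/
def homT (u : ℕ → ℤ) (p : ℕ) (v : ℕ → ℤ) (q : ℕ) : ℤ :=
  ∑ i ∈ Icc 1 p, ∑ j ∈ Icc 1 q, max 0 (v j - u i + 1)

/-- `t` (indexed on `lo..hi`) is `α((lo,…,hi), δ)`: the most balanced weakly
increasing tuple that is entrywise `≥ e` on the block and whose sum exceeds that
of `e` on the block by `δ`. -/
def IsAlphaBlock (e : ℕ → ℤ) (lo hi : ℕ) (δ : ℤ) (t : ℕ → ℤ) : Prop :=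
  (∀ j k, lo ≤ j → j ≤ k → k ≤ hi → t j ≤ t k) ∧
  (∀ j, lo ≤ j → j ≤ hi → e j ≤ t j) ∧
  ((∑ j ∈ Icc lo hi, t j) = (∑ j ∈ Icc lo hi, e j) + δ) ∧
  (∀ t' : ℕ → ℤ, (∀ j k, lo ≤ j → j ≤ k → k ≤ hi → t' j ≤ t' k) →
    (∀ j, lo ≤ j → j ≤ hi → e j ≤ t' j) →
    ((∑ j ∈ Icc lo hi, t' j) = (∑ j ∈ Icc lo hi, e j) + δ) →
    ∀ k, lo ≤ k → k ≤ hi → (∑ j ∈ Icc lo k, t' j) ≤ ∑ j ∈ Icc lo k, t j)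

/-- `t` (indexed on `lo..hi`) is `β((lo,…,hi), δ)`: the most balanced weakly
increasing tuple that is entrywise `≤ e` on the block and whose sum is `δ` less
than that of `e` on the block. -/
def IsBetaBlock (e : ℕ → ℤ) (lo hi : ℕ) (δ : ℤ) (t : ℕ → ℤ) : Prop :=
  (∀ j k, lo ≤ j → j ≤ k → k ≤ hi → t j ≤ t k) ∧
  (∀ j, lo ≤ j → j ≤ hi → t j ≤ e j) ∧
  ((∑ j ∈ Icc lo hi, t j) = (∑ j ∈ Icc lo hi, e j) - δ) ∧
  (∀ t' : ℕ → ℤ, (∀ j k, lo ≤ j → j ≤ k → k ≤ hi → t' j ≤ t' k) →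
    (∀ j, lo ≤ j → j ≤ hi → t' j ≤ e j) →
    ((∑ j ∈ Icc lo hi, t' j) = (∑ j ∈ Icc lo hi, e j) - δ) →
    ∀ k, lo ≤ k → k ≤ hi → (∑ j ∈ Icc lo k, t' j) ≤ ∑ j ∈ Icc lo k, t j)

/-- `(b, a) = Pair(m', n', Λ, δ)`, where the partition
`Λ = (P_1, Q_1, …, P_r, Q_r)` of `(n'+1, …, m+n−m')` is encoded by its block
boundaries `c 0 = n' < c 1 < ⋯ < c (2r) = m+n−m'`, with
`P_i = (c(2i−2)+1, …, c(2i−1))` and `Q_i = (c(2i−1)+1, …, c(2i))`, and where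
`αt i` and `βt i` are the tuples `α(Q_i, δ_i)` and `β(P_i, δ_i)` (indexed by the
block indices of `Q_i`, resp. `P_i`).  This records everything in the
definition of a combinatorially stable pair except the bounds on `δ`. -/
def PairData (e : ℕ → ℤ) (m n : ℕ) (b a : ℕ → ℤ)
    (m' n' r : ℕ) (c : ℕ → ℕ) (δ : ℕ → ℕ) (αt βt : ℕ → ℕ → ℤ) : Prop :=
  m' ≤ m ∧ n' ≤ n ∧ 1 ≤ r ∧
  c 0 = n' ∧ c (2 * r) = m + n - m' ∧
  (∀ i, i < 2 * r → c i < c (i + 1)) ∧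
  ((∑ i ∈ Icc 1 r, (c (2 * i - 1) - c (2 * i - 2))) = m - m') ∧
  (∀ i, 1 ≤ i → i ≤ r - 1 → e (c (2 * i - 1)) < e (c (2 * i + 1) + 1)) ∧
  (∀ i, 1 ≤ i → i ≤ r → IsAlphaBlock e (c (2 * i - 1) + 1) (c (2 * i)) (δ i) (αt i)) ∧
  (∀ i, 1 ≤ i → i ≤ r → IsBetaBlock e (c (2 * i - 2) + 1) (c (2 * i - 1)) (δ i) (βt i)) ∧
  (∀ j, 1 ≤ j → j ≤ n' → a j = e j) ∧
  (∀ i, 1 ≤ i → i ≤ r → ∀ j, c (2 * i - 1) < j → j ≤ c (2 * i) →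
    a (j - (∑ k ∈ Icc 1 i, (c (2 * k - 1) - c (2 * k - 2)))) = αt i j) ∧
  (∀ i, 1 ≤ i → i ≤ r → ∀ j, c (2 * i - 2) < j → j ≤ c (2 * i - 1) →
    b (j - n' - (∑ k ∈ Icc 1 (i - 1), (c (2 * k) - c (2 * k - 1)))) = βt i j) ∧
  (∀ t, 1 ≤ t → t ≤ m' → b (m - m' + t) = e (m + n - m' + t))

/-- The bounds `0 ≤ δ_i ≤ min(ΔP_i, ΔQ_i)`, with the conventions
`ΔP_1 = +∞` when `P_{1,1} = 1` (i.e. `n' = 0`) and `ΔQ_r = +∞` when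
`Q_{r,last} = m+n` (i.e. `m' = 0`). -/
def DeltaBounds (e : ℕ → ℤ) (m' n' r : ℕ) (c : ℕ → ℕ) (δ : ℕ → ℕ) : Prop :=
  ∀ i, 1 ≤ i → i ≤ r →
    ((i = 1 ∧ n' = 0) ∨
      (δ i : ℤ) ≤ ∑ j ∈ Icc (c (2 * i - 2) + 1) (c (2 * i - 1)), (e j - e (c (2 * i - 2)) - 1)) ∧
    ((i = r ∧ m' = 0) ∨
      (δ i : ℤ) ≤ ∑ j ∈ Icc (c (2 * i - 1) + 1) (c (2 * i)), (e (c (2 * i) + 1) - e j - 1))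

/-- `(b,a)` is a combinatorially stable pair with respect to `e`. -/
def CombStable (e : ℕ → ℤ) (m n : ℕ) (b a : ℕ → ℤ) : Prop :=
  ∃ (m' n' r : ℕ) (c : ℕ → ℕ) (δ : ℕ → ℕ) (αt βt : ℕ → ℕ → ℤ),
    PairData e m n b a m' n' r c δ αt βt ∧ DeltaBounds e m' n' r c δ

/-- `(b,a)` is a stable pair with respect to `e`: the triple `(b,e,a)` is
realizable, and no generization in either the quotient or the kernel splitting
type is realizable. -/
def Stable (e b a : ℕ → ℤ) (m n : ℕ) : Prop :=
  RealizCrit b e a m n ∧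
  (∀ a' : ℕ → ℤ, Incr a' n → degT a' n = degT a n → StrictMoreBal a' a n →
    ¬ RealizCrit b e a' m n) ∧
  (∀ b' : ℕ → ℤ, Incr b' m → degT b' m = degT b m → StrictMoreBal b' b m →
    ¬ RealizCrit b' e a m n)

/-- Lemma: if `(b,a) = Pair(m',n',Λ,δ)` is combinatorially stable and
`δ_i > 0` for some `i > 1`, then the pair
`(b'',a'') = Pair(m',n',Λ,δ'')` with `δ'' = (δ_1+1, …, δ_i−1, …, δ_r)` is
realizable and `a'' > a`. -/

private lemma sumShift (f : ℕ → ℤ) (d u v : ℕ) :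
    ∑ j ∈ Icc (d + u) (d + v), f j = ∑ i ∈ Icc u v, f (d + i) := by
  rw [← Finset.map_add_left_Icc, Finset.sum_map]; rfl

/-- covering lemma for a monotone step function -/
private lemma cover (g : ℕ → ℕ) (r μ : ℕ) (h1 : g 0 < μ) (h2 : μ ≤ g r) :
    ∃ k, 1 ≤ k ∧ k ≤ r ∧ g (k - 1) < μ ∧ μ ≤ g k := by
  induction r with
  | zero => omega
  | succ r ih =>
    rcases le_or_gt μ (g r) with h | h
    · obtain ⟨k, hk⟩ := ih h
      exact ⟨k, hk.1, by omega, hk.2.2⟩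
    · exact ⟨r + 1, by omega, le_rfl, by simpa using h, h2⟩

private lemma sum_ite_single (s : Finset ℕ) (j₀ : ℕ) (t : ℕ → ℤ) (v : ℤ) :
    ∑ j ∈ s, (if j = j₀ then t j + v else t j) =
      (∑ j ∈ s, t j) + (if j₀ ∈ s then v else 0) := by
  have : ∀ j ∈ s, (if j = j₀ then t j + v else t j) = t j + (if j = j₀ then v else 0) := by
    intro j _; split_ifs with h <;> simp [h]
  rw [Finset.sum_congr rfl this, Finset.sum_add_distrib, Finset.sum_ite_eq' s j₀ (fun _ => v)]

private lemma alpha_prefix_mono (e t t'' : ℕ → ℤ) (lo hi : ℕ) (d : ℤ) (hlohi : lo ≤ hi)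
    (ht : IsAlphaBlock e lo hi d t) (ht'' : IsAlphaBlock e lo hi (d + 1) t'') :
    ∀ k, lo ≤ k → k ≤ hi → (∑ j ∈ Icc lo k, t j) ≤ ∑ j ∈ Icc lo k, t'' j := by
  intro k hk1 hk2
  set u : ℕ → ℤ := fun j => if j = hi then t j + 1 else t j with hu
  have hmem : hi ∈ Icc lo hi := by simp [hlohi]
  have hincr : ∀ j k, lo ≤ j → j ≤ k → k ≤ hi → u j ≤ u k := by
    intro j k h1 h2 h3
    have hb := ht.1 j k h1 h2 h3
    simp only [hu]
    by_cases hk' : k = hi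
    · by_cases hj : j = hi
      · simp [hj, hk']
      · simp only [if_neg hj, if_pos hk']; omega
    · have hj : ¬ j = hi := by omega
      simp only [if_neg hj, if_neg hk']; exact hb
  have hge : ∀ j, lo ≤ j → j ≤ hi → e j ≤ u j := by
    intro j h1 h2; have := ht.2.1 j h1 h2; simp only [hu]; split_ifs <;> omega
  have hsum : (∑ j ∈ Icc lo hi, u j) = (∑ j ∈ Icc lo hi, e j) + (d + 1) := by
    rw [hu, sum_ite_single, if_pos hmem, ht.2.2.1]; ring
  have hmax := ht''.2.2.2 u hincr hge hsum k hk1 hk2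
  refine le_trans ?_ hmax
  rw [hu, sum_ite_single]
  split_ifs <;> omega

private lemma alpha_prefix_down (e t t'' : ℕ → ℤ) (lo hi : ℕ) (d : ℤ) (hd : 0 ≤ d)
    (hlohi : lo ≤ hi) (he : ∀ j k, lo ≤ j → j ≤ k → k ≤ hi → e j ≤ e k)
    (ht : IsAlphaBlock e lo hi (d + 1) t) (ht'' : IsAlphaBlock e lo hi d t'') :
    ∀ k, lo ≤ k → k ≤ hi → (∑ j ∈ Icc lo k, t j) ≤ (∑ j ∈ Icc lo k, t'' j) + 1 := by
  intro k hk1 hk2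
  -- find the least index where e < t
  have hne : {j : ℕ | lo ≤ j ∧ j ≤ hi ∧ e j < t j}.Nonempty := by
    by_contra hemp
    push_neg at hemp
    simp only [Set.not_nonempty_iff_eq_empty, Set.eq_empty_iff_forall_notMem] at hemp
    have : (∑ j ∈ Icc lo hi, t j) ≤ ∑ j ∈ Icc lo hi, e j := by
      apply Finset.sum_le_sum
      intro j hj
      simp only [Finset.mem_Icc] at hj
      have := hemp j
      simp only [Set.mem_setOf_eq, not_and, not_lt] at this
      exact this hj.1 hj.2
    have := ht.2.2.1
    omega
  set j₀ := sInf {j : ℕ | lo ≤ j ∧ j ≤ hi ∧ e j < t j} with hj₀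
  have hj₀mem : lo ≤ j₀ ∧ j₀ ≤ hi ∧ e j₀ < t j₀ := Nat.sInf_mem hne
  have hj₀min : ∀ j, lo ≤ j → j < j₀ → t j = e j := by
    intro j h1 h2
    have h3 : j ≤ hi := by omega
    by_contra hne'
    have : e j < t j := lt_of_le_of_ne (ht.2.1 j h1 h3) (Ne.symm hne')
    have : j₀ ≤ j := Nat.sInf_le ⟨h1, h3, this⟩
    omega
  set u : ℕ → ℤ := fun j => if j = j₀ then t j + (-1) else t j with hu
  have hincr : ∀ j k, lo ≤ j → j ≤ k → k ≤ hi → u j ≤ u k := by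
    intro j k h1 h2 h3
    have hb := ht.1 j k h1 h2 h3
    simp only [hu]
    by_cases hj : j = j₀
    · by_cases hk' : k = j₀
      · simp [hj, hk']
      · simp only [if_pos hj, if_neg hk']; omega
    · by_cases hk' : k = j₀
      · simp only [if_neg hj, if_pos hk']
        have hjlt : j < j₀ := by omega
        have h4 := hj₀min j h1 hjlt
        have h5 : e j ≤ e j₀ := he j j₀ h1 (by omega) (by omega)
        have h6 := hj₀mem.2.2
        rw [hk'] at hb ⊢
        omega
      · simp only [if_neg hj, if_neg hk']; exact hb
  have hge : ∀ j, lo ≤ j → j ≤ hi → e j ≤ u j := by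
    intro j h1 h2
    have := ht.2.1 j h1 h2
    simp only [hu]; split_ifs with h
    · subst h; omega
    · omega
  have hsum : (∑ j ∈ Icc lo hi, u j) = (∑ j ∈ Icc lo hi, e j) + d := by
    rw [hu, sum_ite_single, if_pos (by simp [Finset.mem_Icc]; omega), ht.2.2.1]; ring
  have hmax := ht''.2.2.2 u hincr hge hsum k hk1 hk2
  have : (∑ j ∈ Icc lo k, t j) ≤ (∑ j ∈ Icc lo k, u j) + 1 := by
    rw [hu, sum_ite_single]; split_ifs <;> omega
  omega

private def SpF (c : ℕ → ℕ) (k : ℕ) : ℕ := ∑ l ∈ Icc 1 k, (c (2*l - 1) - c (2*l - 2))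
private def SqF (c : ℕ → ℕ) (k : ℕ) : ℕ := ∑ l ∈ Icc 1 k, (c (2*l) - c (2*l - 1))

private lemma SpF_zero (c : ℕ → ℕ) : SpF c 0 = 0 := by simp [SpF]
private lemma SqF_zero (c : ℕ → ℕ) : SqF c 0 = 0 := by simp [SqF]

private lemma SpF_succ (c : ℕ → ℕ) (k : ℕ) : SpF c (k+1) = SpF c k + (c (2*k+1) - c (2*k)) := by
  have h := Finset.sum_Icc_succ_top (f := fun l => c (2*l - 1) - c (2*l - 2)) (by omega : 1 ≤ k + 1)
  simp only [SpF, h]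
  congr 2 <;> omega

private lemma SqF_succ (c : ℕ → ℕ) (k : ℕ) : SqF c (k+1) = SqF c k + (c (2*k+2) - c (2*k+1)) := by
  have h := Finset.sum_Icc_succ_top (f := fun l => c (2*l) - c (2*l - 1)) (by omega : 1 ≤ k + 1)
  simp only [SqF, h]
  congr 2 <;> omega

private lemma SpF_mono (c : ℕ → ℕ) {j k : ℕ} (h : j ≤ k) : SpF c j ≤ SpF c k :=
  Finset.sum_le_sum_of_subset (Finset.Icc_subset_Icc_right h)

private lemma SqF_mono (c : ℕ → ℕ) {j k : ℕ} (h : j ≤ k) : SqF c j ≤ SqF c k :=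
  Finset.sum_le_sum_of_subset (Finset.Icc_subset_Icc_right h)

private lemma cmono (c : ℕ → ℕ) (r : ℕ) (hcstep : ∀ i, i < 2*r → c i < c (i+1)) :
    ∀ i j, i ≤ j → j ≤ 2*r → c i ≤ c j := by
  intro i j hij hj
  obtain ⟨d, rfl⟩ := Nat.exists_eq_add_of_le hij
  clear hij
  induction d with
  | zero => simp
  | succ d ih =>
    have e : i + (d + 1) = i + d + 1 := by omega
    rw [e]
    have h1 : c (i + d) ≤ c (i + d + 1) := le_of_lt (hcstep (i+d) (by omega))
    have h2 := ih (by omega)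
    omega

private lemma cId (c : ℕ → ℕ) (n' r : ℕ) (hc0 : c 0 = n')
    (hcstep : ∀ i, i < 2*r → c i < c (i+1)) :
    ∀ k, k ≤ r → c (2*k) = n' + SpF c k + SqF c k ∧
      (1 ≤ k → c (2*k-1) = n' + SpF c k + SqF c (k-1)) := by
  intro k
  induction k with
  | zero => intro _; refine ⟨by simpa [SpF_zero, SqF_zero] using hc0, by omega⟩
  | succ k ih =>
    intro hk
    obtain ⟨h1, _⟩ := ih (by omega)
    have m1 : c (2*k) ≤ c (2*k+1) := le_of_lt (hcstep (2*k) (by omega))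
    have m2 : c (2*k+1) ≤ c (2*k+2) := le_of_lt (hcstep (2*k+1) (by omega))
    have e1 : 2*(k+1) = 2*k+2 := by omega
    have e2 : 2*(k+1)-1 = 2*k+1 := by omega
    have e3 : k+1-1 = k := by omega
    rw [e2, e3, e1, SpF_succ, SqF_succ]
    omega

private lemma blockA (c : ℕ → ℕ) (n' r : ℕ) (hc0 : c 0 = n')
    (hcstep : ∀ i, i < 2*r → c i < c (i+1))
    (aa : ℕ → ℤ) (At : ℕ → ℕ → ℤ)
    (hfield : ∀ i, 1 ≤ i → i ≤ r → ∀ j, c (2*i-1) < j → j ≤ c (2*i) → aa (j - SpF c i) = At i j)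
    (k : ℕ) (hk1 : 1 ≤ k) (hkr : k ≤ r) (w : ℕ)
    (hw2 : w ≤ n' + SqF c k) :
    ∑ i ∈ Ioc (n' + SqF c (k-1)) w, aa i = ∑ j ∈ Ioc (c (2*k-1)) (w + SpF c k), At k j := by
  obtain ⟨hck, hck1⟩ := cId c n' r hc0 hcstep k hkr
  have hck1' := hck1 hk1
  rcases le_or_gt (n' + SqF c (k-1)) w with hw1 | hw1
  · rw [← Finset.Icc_add_one_left_eq_Ioc, ← Finset.Icc_add_one_left_eq_Ioc]
    have e1 : c (2*k-1) + 1 = SpF c k + (n' + SqF c (k-1) + 1) := by omega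
    have e2 : w + SpF c k = SpF c k + w := by omega
    rw [e1, e2, sumShift]
    refine (Finset.sum_congr rfl ?_).symm
    intro i hi
    simp only [Finset.mem_Icc] at hi
    have h := hfield k hk1 hkr (SpF c k + i) (by omega) (by omega)
    rw [show SpF c k + i - SpF c k = i by omega] at h
    exact h.symm
  · rw [Finset.Ioc_eq_empty (by omega), Finset.Ioc_eq_empty (by omega), Finset.sum_empty,
      Finset.sum_empty]

private lemma blockB (c : ℕ → ℕ) (n' r : ℕ) (hc0 : c 0 = n')
    (hcstep : ∀ i, i < 2*r → c i < c (i+1))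
    (bb : ℕ → ℤ) (Bt : ℕ → ℕ → ℤ)
    (hfield : ∀ i, 1 ≤ i → i ≤ r → ∀ j, c (2*i-2) < j → j ≤ c (2*i-1) →
      bb (j - n' - SqF c (i-1)) = Bt i j)
    (k : ℕ) (hk1 : 1 ≤ k) (hkr : k ≤ r) (w : ℕ)
    (hw2 : w ≤ SpF c k) :
    ∑ i ∈ Ioc (SpF c (k-1)) w, bb i = ∑ j ∈ Ioc (c (2*k-2)) (w + (n' + SqF c (k-1))), Bt k j := by
  obtain ⟨hck, hck1⟩ := cId c n' r hc0 hcstep k hkr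
  have hck1' := hck1 hk1
  have hck2 : c (2*k-2) = n' + SpF c (k-1) + SqF c (k-1) := by
    have := (cId c n' r hc0 hcstep (k-1) (by omega)).1
    rw [show 2*(k-1) = 2*k-2 by omega] at this
    exact this
  rcases le_or_gt (SpF c (k-1)) w with hw1 | hw1
  · rw [← Finset.Icc_add_one_left_eq_Ioc, ← Finset.Icc_add_one_left_eq_Ioc]
    have e1 : c (2*k-2) + 1 = (n' + SqF c (k-1)) + (SpF c (k-1) + 1) := by omega
    have e2 : w + (n' + SqF c (k-1)) = (n' + SqF c (k-1)) + w := by omega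
    rw [e1, e2, sumShift]
    refine (Finset.sum_congr rfl ?_).symm
    intro i hi
    simp only [Finset.mem_Icc] at hi
    have h := hfield k hk1 hkr (n' + SqF c (k-1) + i) (by omega) (by omega)
    rw [show n' + SqF c (k-1) + i - n' - SqF c (k-1) = i by omega] at h
    exact h.symm
  · rw [Finset.Ioc_eq_empty (by omega), Finset.Ioc_eq_empty (by omega), Finset.sum_empty,
      Finset.sum_empty]

private lemma prefA (e : ℕ → ℤ) (c : ℕ → ℕ) (n' r : ℕ) (hc0 : c 0 = n')
    (hcstep : ∀ i, i < 2*r → c i < c (i+1))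
    (aa : ℕ → ℤ) (At : ℕ → ℕ → ℤ) (dd : ℕ → ℤ)
    (hpre : ∀ j, 1 ≤ j → j ≤ n' → aa j = e j)
    (hfield : ∀ i, 1 ≤ i → i ≤ r → ∀ j, c (2*i-1) < j → j ≤ c (2*i) → aa (j - SpF c i) = At i j)
    (hsum : ∀ i, 1 ≤ i → i ≤ r → (∑ j ∈ Ioc (c (2*i-1)) (c (2*i)), At i j) =
      (∑ j ∈ Ioc (c (2*i-1)) (c (2*i)), e j) + dd i) :
    ∀ k, k ≤ r → ∑ i ∈ Ioc 0 (n' + SqF c k), aa i =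
      (∑ j ∈ Ioc 0 n', e j) + ∑ l ∈ Icc 1 k, ((∑ j ∈ Ioc (c (2*l-1)) (c (2*l)), e j) + dd l) := by
  intro k
  induction k with
  | zero =>
    intro _
    simp only [SqF_zero, Nat.add_zero, Finset.Icc_self, Icc_eq_empty_of_lt (by omega : (1:ℕ) > 0)]
    rw [Finset.sum_empty, add_zero]
    refine Finset.sum_congr rfl ?_
    intro i hi
    simp only [Finset.mem_Ioc] at hi
    exact hpre i (by omega) hi.2
  | succ k ih =>
    intro hk
    have hmono : SqF c k ≤ SqF c (k+1) := SqF_mono c (by omega)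
    rw [← Finset.sum_Ioc_consecutive aa (by omega : 0 ≤ n' + SqF c k)
      (by omega : n' + SqF c k ≤ n' + SqF c (k+1))]
    rw [ih (by omega)]
    have hb := blockA c n' r hc0 hcstep aa At hfield (k+1) (by omega) hk
      (n' + SqF c (k+1)) le_rfl
    rw [show k+1-1 = k by omega] at hb
    have hid := (cId c n' r hc0 hcstep (k+1) hk).1
    rw [show n' + SqF c (k+1) + SpF c (k+1) = c (2*(k+1)) by omega] at hb
    rw [hb, hsum (k+1) (by omega) hk, Finset.sum_Icc_succ_top (by omega : 1 ≤ k+1)]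
    ring

private lemma prefB (e : ℕ → ℤ) (c : ℕ → ℕ) (n' r : ℕ) (hc0 : c 0 = n')
    (hcstep : ∀ i, i < 2*r → c i < c (i+1))
    (bb : ℕ → ℤ) (Bt : ℕ → ℕ → ℤ) (dd : ℕ → ℤ)
    (hfield : ∀ i, 1 ≤ i → i ≤ r → ∀ j, c (2*i-2) < j → j ≤ c (2*i-1) →
      bb (j - n' - SqF c (i-1)) = Bt i j)
    (hsum : ∀ i, 1 ≤ i → i ≤ r → (∑ j ∈ Ioc (c (2*i-2)) (c (2*i-1)), Bt i j) =
      (∑ j ∈ Ioc (c (2*i-2)) (c (2*i-1)), e j) - dd i) :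
    ∀ k, k ≤ r → ∑ i ∈ Ioc 0 (SpF c k), bb i =
      ∑ l ∈ Icc 1 k, ((∑ j ∈ Ioc (c (2*l-2)) (c (2*l-1)), e j) - dd l) := by
  intro k
  induction k with
  | zero =>
    intro _
    simp [SpF_zero, Icc_eq_empty_of_lt (by omega : (1:ℕ) > 0)]
  | succ k ih =>
    intro hk
    have hmono : SpF c k ≤ SpF c (k+1) := SpF_mono c (by omega)
    rw [← Finset.sum_Ioc_consecutive bb (by omega : 0 ≤ SpF c k)
      (by omega : SpF c k ≤ SpF c (k+1))]
    rw [ih (by omega)]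
    have hb := blockB c n' r hc0 hcstep bb Bt hfield (k+1) (by omega) hk (SpF c (k+1)) le_rfl
    rw [show k+1-1 = k by omega] at hb
    have hid := (cId c n' r hc0 hcstep (k+1) hk).2 (by omega)
    rw [show k+1-1 = k by omega] at hid
    rw [show SpF c (k+1) + (n' + SqF c k) = c (2*(k+1)-1) by omega] at hb
    rw [hb, hsum (k+1) (by omega) hk, Finset.sum_Icc_succ_top (by omega : 1 ≤ k+1)]

private lemma ePref (e : ℕ → ℤ) (c : ℕ → ℕ) (n' r : ℕ) (hc0 : c 0 = n')
    (hcstep : ∀ i, i < 2*r → c i < c (i+1)) :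
    ∀ k, k ≤ r → ∑ j ∈ Ioc 0 (c (2*k)), e j =
      (∑ j ∈ Ioc 0 n', e j) + ∑ l ∈ Icc 1 k,
        ((∑ j ∈ Ioc (c (2*l-2)) (c (2*l-1)), e j) + (∑ j ∈ Ioc (c (2*l-1)) (c (2*l)), e j)) := by
  intro k
  induction k with
  | zero =>
    intro _
    simp [hc0, Icc_eq_empty_of_lt (by omega : (1:ℕ) > 0)]
  | succ k ih =>
    intro hk
    have m1 : c (2*k) ≤ c (2*k+1) := le_of_lt (hcstep (2*k) (by omega))
    have m2 : c (2*k+1) ≤ c (2*k+2) := le_of_lt (hcstep (2*k+1) (by omega))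
    have hcc : c 0 ≤ c (2*k) := cmono c r hcstep 0 (2*k) (by omega) (by omega)
    rw [Finset.sum_Icc_succ_top (by omega : 1 ≤ k+1), show 2*(k+1)-2 = 2*k by omega,
      show 2*(k+1)-1 = 2*k+1 by omega, show 2*(k+1) = 2*k+2 by omega,
      ← Finset.sum_Ioc_consecutive e (by omega : 0 ≤ c (2*k)) (by omega : c (2*k) ≤ c (2*k+2)),
      ← Finset.sum_Ioc_consecutive e m1 m2, ih (by omega)]
    ring

set_option maxHeartbeats 1000000 in
theorem stmt16 (m n : ℕ) (hm : 1 ≤ m) (hn : 1 ≤ n)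
    (e b a : ℕ → ℤ) (he : Incr e (m + n)) (hb : Incr b m) (ha : Incr a n)
    (m' n' r : ℕ) (c : ℕ → ℕ) (δ : ℕ → ℕ) (αt βt : ℕ → ℕ → ℤ)
    (hpair : PairData e m n b a m' n' r c δ αt βt)
    (hbounds : DeltaBounds e m' n' r c δ)
    (i0 : ℕ) (hi01 : 2 ≤ i0) (hi0r : i0 ≤ r) (hδ : 1 ≤ δ i0)
    (b'' a'' : ℕ → ℤ) (hb'' : Incr b'' m) (ha'' : Incr a'' n)
    (αt'' βt'' : ℕ → ℕ → ℤ)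
    (hpair'' : PairData e m n b'' a'' m' n' r c
      (fun j => if j = 1 then δ 1 + 1 else if j = i0 then δ i0 - 1 else δ j)
      αt'' βt'') :
    RealizCrit b'' e a'' m n ∧ StrictMoreBal a'' a n := by
  classical
  obtain ⟨hm'm, hn'n, hr1, hc0, hc2r, hcstep, hSpr0, hgap'', hα'', hβ'', hapre'', haQ'', hbP'',
    hbsuf''⟩ := hpair''
  obtain ⟨-, -, -, -, -, -, -, -, hα, -, hapre, haQ, -, -⟩ := hpair
  -- notation bridges
  have hSpr : SpF c r = m - m' := hSpr0
  have hcIdf := cId c n' r hc0 hcstep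
  have hSqr : n' + SqF c r = n := by
    have h1 := (hcIdf r le_rfl).1
    omega
  have hcmono : ∀ i j, i ≤ j → j ≤ 2*r → c i ≤ c j := cmono c r hcstep
  have haQ''f : ∀ i, 1 ≤ i → i ≤ r → ∀ j, c (2*i-1) < j → j ≤ c (2*i) →
      a'' (j - SpF c i) = αt'' i j := by
    intro i h1 h2 j h3 h4
    have := haQ'' i h1 h2 j h3 h4
    simpa [SpF] using this
  have haQf : ∀ i, 1 ≤ i → i ≤ r → ∀ j, c (2*i-1) < j → j ≤ c (2*i) →
      a (j - SpF c i) = αt i j := by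
    intro i h1 h2 j h3 h4
    have := haQ i h1 h2 j h3 h4
    simpa [SpF] using this
  have hbP''f : ∀ i, 1 ≤ i → i ≤ r → ∀ j, c (2*i-2) < j → j ≤ c (2*i-1) →
      b'' (j - n' - SqF c (i-1)) = βt'' i j := by
    intro i h1 h2 j h3 h4
    have := hbP'' i h1 h2 j h3 h4
    simpa [SqF] using this
  -- the new delta as an integer function
  set D : ℕ → ℤ :=
    fun l => (((if l = 1 then δ 1 + 1 else if l = i0 then δ i0 - 1 else δ l) : ℕ) : ℤ) with hD
  have hD1 : D 1 = (δ 1 : ℤ) + 1 := by simp [hD]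
  have hDi0 : D i0 = (δ i0 : ℤ) - 1 := by
    have h1 : ¬ (i0 = 1) := by omega
    simp only [hD]
    split_ifs <;> omega
  have hDother : ∀ l, l ≠ 1 → l ≠ i0 → D l = (δ l : ℤ) := by
    intro l h1 h2
    simp [hD, h1, h2]
  have hα''D : ∀ i, 1 ≤ i → i ≤ r →
      IsAlphaBlock e (c (2*i-1) + 1) (c (2*i)) (D i) (αt'' i) := fun i h1 h2 => hα'' i h1 h2
  have hβ''D : ∀ i, 1 ≤ i → i ≤ r →
      IsBetaBlock e (c (2*i-2) + 1) (c (2*i-1)) (D i) (βt'' i) := fun i h1 h2 => hβ'' i h1 h2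
  -- block sum identities
  have hsumA'' : ∀ i, 1 ≤ i → i ≤ r → (∑ j ∈ Ioc (c (2*i-1)) (c (2*i)), αt'' i j) =
      (∑ j ∈ Ioc (c (2*i-1)) (c (2*i)), e j) + D i := by
    intro i h1 h2
    have := (hα''D i h1 h2).2.2.1
    rwa [Finset.Icc_add_one_left_eq_Ioc] at this
  have hsumA : ∀ i, 1 ≤ i → i ≤ r → (∑ j ∈ Ioc (c (2*i-1)) (c (2*i)), αt i j) =
      (∑ j ∈ Ioc (c (2*i-1)) (c (2*i)), e j) + (δ i : ℤ) := by
    intro i h1 h2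
    have := (hα i h1 h2).2.2.1
    rwa [Finset.Icc_add_one_left_eq_Ioc] at this
  have hsumB'' : ∀ i, 1 ≤ i → i ≤ r → (∑ j ∈ Ioc (c (2*i-2)) (c (2*i-1)), βt'' i j) =
      (∑ j ∈ Ioc (c (2*i-2)) (c (2*i-1)), e j) - D i := by
    intro i h1 h2
    have := (hβ''D i h1 h2).2.2.1
    rwa [Finset.Icc_add_one_left_eq_Ioc] at this
  -- prefix sum identities
  have PA'' := prefA e c n' r hc0 hcstep a'' αt'' D hapre'' haQ''f hsumA''
  have PA := prefA e c n' r hc0 hcstep a αt (fun l => (δ l : ℤ)) hapre haQf hsumA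
  have PB'' := prefB e c n' r hc0 hcstep b'' βt'' D hbP''f hsumB''
  have PE := ePref e c n' r hc0 hcstep
  -- suffix of b''
  have hsuffix : ∀ w, m - m' < w → ∑ i ∈ Icc w m, b'' i = ∑ j ∈ Icc (w+n) (m+n), e j := by
    intro w hw
    rw [show w + n = n + w by omega, show m + n = n + m by omega, sumShift]
    refine Finset.sum_congr rfl ?_
    intro i hi
    simp only [Finset.mem_Icc] at hi
    have h := hbsuf'' (i - (m - m')) (by omega) (by omega)
    rw [show m - m' + (i - (m - m')) = i by omega,
      show m + n - m' + (i - (m - m')) = n + i by omega] at h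
    exact h
  have keyH : ∀ k, k ≤ r → (∑ i ∈ Ioc 0 (n' + SqF c k), a'' i) + (∑ i ∈ Ioc 0 (SpF c k), b'' i)
      = ∑ j ∈ Ioc 0 (c (2*k)), e j := by
    intro k hk
    have h2 : ∑ l ∈ Icc 1 k, ((∑ j ∈ Ioc (c (2*l-2)) (c (2*l-1)), e j)
        + (∑ j ∈ Ioc (c (2*l-1)) (c (2*l)), e j))
        = (∑ l ∈ Icc 1 k, ((∑ j ∈ Ioc (c (2*l-1)) (c (2*l)), e j) + D l))
          + ∑ l ∈ Icc 1 k, ((∑ j ∈ Ioc (c (2*l-2)) (c (2*l-1)), e j) - D l) := by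
      rw [← Finset.sum_add_distrib]
      refine Finset.sum_congr rfl ?_
      intro l _
      ring
    rw [PA'' k hk, PB'' k hk, PE k hk, h2]
    ring
  have degEq : (∑ i ∈ Ioc 0 n, a'' i) + (∑ i ∈ Ioc 0 m, b'' i) = ∑ j ∈ Ioc 0 (m+n), e j := by
    have h1 := keyH r le_rfl
    rw [hSqr, hc2r] at h1
    have h2 : (∑ i ∈ Ioc 0 (SpF c r), b'' i) + (∑ i ∈ Ioc (m - m') m, b'' i)
        = ∑ i ∈ Ioc 0 m, b'' i := by
      rw [hSpr]
      exact Finset.sum_Ioc_consecutive b'' (by omega) (by omega)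
    have h3 : ∑ i ∈ Ioc (m - m') m, b'' i = ∑ j ∈ Ioc (m + n - m') (m + n), e j := by
      rw [← Finset.Icc_add_one_left_eq_Ioc, ← Finset.Icc_add_one_left_eq_Ioc]
      rw [hsuffix (m - m' + 1) (by omega), show m - m' + 1 + n = m + n - m' + 1 by omega]
    have h4 : (∑ j ∈ Ioc 0 (m + n - m'), e j) + (∑ j ∈ Ioc (m + n - m') (m + n), e j)
        = ∑ j ∈ Ioc 0 (m + n), e j :=
      Finset.sum_Ioc_consecutive e (by omega) (by omega)
    linarith
  have L2 : ∀ μ, m - m' < μ → μ ≤ m → Sfun b'' e a'' m n μ (n+1) = 0 := by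
    intro μ h1 h2
    unfold Sfun
    rw [Finset.Icc_eq_empty (by omega), Finset.sum_empty,
      show μ + (n+1) - 1 = μ + n by omega, hsuffix μ h1]
    ring
  have L1 : ∀ k, 1 ≤ k → k ≤ r → ∀ μ, SpF c (k-1) < μ → μ ≤ SpF c k →
      0 ≤ Sfun b'' e a'' m n μ (n' + SqF c (k-1) + 1) := by
    intro k hk1 hkr μ hμ1 hμ2
    have hSqmono : SqF c (k-1) ≤ SqF c r := SqF_mono c (by omega)
    have hSpmono : SpF c k ≤ SpF c r := SpF_mono c (by omega)
    have hid1 := (hcIdf k hkr).2 hk1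
    have hid2 : c (2*k-2) = n' + SpF c (k-1) + SqF c (k-1) := by
      have := (hcIdf (k-1) (by omega)).1
      rwa [show 2*(k-1) = 2*k-2 by omega] at this
    have hc2kmn : c (2*k-1) ≤ m + n := by
      have h := hcmono (2*k-1) (2*r) (by omega) le_rfl
      omega
    unfold Sfun
    -- a-part
    have ha1 : ∑ i ∈ Icc (n' + SqF c (k-1) + 1) n, a'' i
        = (∑ i ∈ Ioc 0 n, a'' i) - ∑ i ∈ Ioc 0 (n' + SqF c (k-1)), a'' i := by
      rw [Finset.Icc_add_one_left_eq_Ioc]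
      have := Finset.sum_Ioc_consecutive a'' (by omega : 0 ≤ n' + SqF c (k-1))
        (by omega : n' + SqF c (k-1) ≤ n)
      linarith
    -- b-part
    have hb1 : ∑ i ∈ Icc μ m, b'' i = (∑ i ∈ Ioc 0 m, b'' i) - ∑ i ∈ Ioc 0 (μ-1), b'' i := by
      have hIccμ : Icc μ m = Ioc (μ-1) m := by
        rw [← Finset.Icc_add_one_left_eq_Ioc]
        congr 1
        omega
      rw [hIccμ]
      have := Finset.sum_Ioc_consecutive b'' (by omega : 0 ≤ μ - 1) (by omega : μ - 1 ≤ m)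
      linarith
    have hb2 : ∑ i ∈ Ioc 0 (μ-1), b'' i
        = (∑ i ∈ Ioc 0 (SpF c (k-1)), b'' i) + ∑ i ∈ Ioc (SpF c (k-1)) (μ-1), b'' i :=
      (Finset.sum_Ioc_consecutive b'' (by omega) (by omega)).symm
    have hb3 : ∑ i ∈ Ioc (SpF c (k-1)) (μ-1), b'' i
        = ∑ j ∈ Ioc (c (2*k-2)) ((μ-1) + (n' + SqF c (k-1))), βt'' k j :=
      blockB c n' r hc0 hcstep b'' βt'' hbP''f k hk1 hkr (μ-1) (by omega)
    -- e-part
    have he0 : μ + (n' + SqF c (k-1) + 1) - 1 = (μ - 1 + (n' + SqF c (k-1))) + 1 := by omega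
    have he1 : ∑ j ∈ Icc (μ + (n' + SqF c (k-1) + 1) - 1) (m+n), e j
        = (∑ j ∈ Ioc 0 (m+n), e j) - ∑ j ∈ Ioc 0 (μ - 1 + (n' + SqF c (k-1))), e j := by
      rw [he0, Finset.Icc_add_one_left_eq_Ioc]
      have := Finset.sum_Ioc_consecutive e (by omega : 0 ≤ μ - 1 + (n' + SqF c (k-1)))
        (by omega : μ - 1 + (n' + SqF c (k-1)) ≤ m + n)
      linarith
    have he2 : ∑ j ∈ Ioc 0 (μ - 1 + (n' + SqF c (k-1))), e j
        = (∑ j ∈ Ioc 0 (c (2*(k-1))), e j) + ∑ j ∈ Ioc (c (2*(k-1))) (μ - 1 + (n' + SqF c (k-1))), e j := by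
      refine (Finset.sum_Ioc_consecutive e (by omega) ?_).symm
      rw [show 2*(k-1) = 2*k-2 by omega]
      omega
    have hK := keyH (k-1) (by omega)
    rw [show 2*(k-1) = 2*k-2 by omega] at he2 hK
    -- the residual sum is nonnegative
    have hres : ∑ j ∈ Ioc (c (2*k-2)) ((μ-1) + (n' + SqF c (k-1))), βt'' k j
        ≤ ∑ j ∈ Ioc (c (2*k-2)) ((μ-1) + (n' + SqF c (k-1))), e j := by
      refine Finset.sum_le_sum ?_
      intro j hj
      simp only [Finset.mem_Ioc] at hj
      exact (hβ''D k hk1 hkr).2.1 j (by omega) (by omega)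
    rw [ha1, hb1, hb2, hb3, he1, he2]
    linarith [degEq]
  have hgt : ∀ μ ν, ∀ ν', ν < ν' → ν' ≤ n + 1 → 0 ≤ Sfun b'' e a'' m n μ ν' →
      ¬ (hfun b'' e a'' m n μ ≤ ν) := by
    intro μ ν ν' h1 h2 h3 hle
    have hne : {x : ℕ | 1 ≤ x ∧ x ≤ n+1 ∧ ∀ y, x < y → y ≤ n+1 → Sfun b'' e a'' m n μ y < 0}.Nonempty :=
      ⟨n+1, by omega, le_rfl, fun y hy1 hy2 => absurd hy2 (by omega)⟩
    have hmem := Nat.sInf_mem hne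
    have heq : hfun b'' e a'' m n μ
        = sInf {x : ℕ | 1 ≤ x ∧ x ≤ n+1 ∧ ∀ y, x < y → y ≤ n+1 → Sfun b'' e a'' m n μ y < 0} := rfl
    rw [heq] at hle
    have := hmem.2.2 ν' (by omega) h2
    omega
  have haval'' : ∀ k, 1 ≤ k → k ≤ r → ∀ i, n' + SqF c (k-1) < i → i ≤ n' + SqF c k →
      a'' i = αt'' k (i + SpF c k) := by
    intro k h1 h2 i hi1 hi2
    have hid := (hcIdf k h2).1
    have hid1 := (hcIdf k h2).2 h1
    have h := haQ''f k h1 h2 (i + SpF c k) (by omega) (by omega)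
    rw [show i + SpF c k - SpF c k = i by omega] at h
    exact h
  have haval : ∀ k, 1 ≤ k → k ≤ r → ∀ i, n' + SqF c (k-1) < i → i ≤ n' + SqF c k →
      a i = αt k (i + SpF c k) := by
    intro k h1 h2 i hi1 hi2
    have hid := (hcIdf k h2).1
    have hid1 := (hcIdf k h2).2 h1
    have h := haQf k h1 h2 (i + SpF c k) (by omega) (by omega)
    rw [show i + SpF c k - SpF c k = i by omega] at h
    exact h
  have hbval'' : ∀ k, 1 ≤ k → k ≤ r → ∀ i, SpF c (k-1) < i → i ≤ SpF c k →
      b'' i = βt'' k (i + (n' + SqF c (k-1))) := by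
    intro k h1 h2 i hi1 hi2
    have hid1 := (hcIdf k h2).2 h1
    have hid2 : c (2*k-2) = n' + SpF c (k-1) + SqF c (k-1) := by
      have := (hcIdf (k-1) (by omega)).1
      rwa [show 2*(k-1) = 2*k-2 by omega] at this
    have h := hbP''f k h1 h2 (i + (n' + SqF c (k-1))) (by omega) (by omega)
    rw [show i + (n' + SqF c (k-1)) - n' - SqF c (k-1) = i by omega] at h
    exact h
  -- weak eligibility
  have hIcc1 : ∀ t : ℕ, Icc 1 t = Ioc 0 t := fun t => Finset.Icc_add_one_left_eq_Ioc 0 t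
  have hWE : WeaklyEligible b'' e a'' m n := by
    refine ⟨?_, ?_, ?_⟩
    · unfold degT
      rw [hIcc1 n, hIcc1 m, hIcc1 (m+n)]
      exact degEq
    · intro i h1 h2
      rcases le_or_gt i n' with h | h
      · rw [hapre'' i h1 h]
      · obtain ⟨k, hk1, hkr, hlo, hhi⟩ := cover (fun k => n' + SqF c k) r i
          (show n' + SqF c 0 < i by rw [SqF_zero]; omega)
          (show i ≤ n' + SqF c r by omega)
        replace hlo : n' + SqF c (k-1) < i := hlo
        replace hhi : i ≤ n' + SqF c k := hhi
        have hid := (hcIdf k hkr).1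
        have hid1 := (hcIdf k hkr).2 hk1
        have hc2kmn : c (2*k) ≤ m + n := by
          have := hcmono (2*k) (2*r) (by omega) le_rfl
          omega
        rw [haval'' k hk1 hkr i hlo hhi]
        have h6 : e i ≤ e (i + SpF c k) := he i (i + SpF c k) h1 (by omega) (by omega)
        have h7 : e (i + SpF c k) ≤ αt'' k (i + SpF c k) :=
          (hα''D k hk1 hkr).2.1 _ (by omega) (by omega)
        linarith
    · intro i h1 h2
      rcases le_or_gt i (m - m') with h | h
      · obtain ⟨k, hk1, hkr, hlo, hhi⟩ := cover (SpF c) r i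
          (by simp only [SpF_zero]; omega) (by omega)
        have hid1 := (hcIdf k hkr).2 hk1
        have hid2 : c (2*k-2) = n' + SpF c (k-1) + SqF c (k-1) := by
          have := (hcIdf (k-1) (by omega)).1
          rwa [show 2*(k-1) = 2*k-2 by omega] at this
        have hSqk : SqF c (k-1) ≤ SqF c r := SqF_mono c (by omega)
        have hc2kmn : c (2*k-1) ≤ m + n := by
          have := hcmono (2*k-1) (2*r) (by omega) le_rfl
          omega
        rw [hbval'' k hk1 hkr i hlo hhi]
        have h6 : βt'' k (i + (n' + SqF c (k-1))) ≤ e (i + (n' + SqF c (k-1))) :=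
          (hβ''D k hk1 hkr).2.1 _ (by omega) (by omega)
        have h7 : e (i + (n' + SqF c (k-1))) ≤ e (n + i) := he _ _ (by omega) (by omega) (by omega)
        linarith
      · have hh := hbsuf'' (i - (m - m')) (by omega) (by omega)
        rw [show m - m' + (i - (m - m')) = i by omega,
          show m + n - m' + (i - (m - m')) = n + i by omega] at hh
        exact le_of_eq hh
  refine ⟨⟨hWE, ?_⟩, ?_, ?_⟩
  · -- criterion
    intro μ ν h1 h2 h3 h4 h5
    rcases le_or_gt μ (m - m') with hμ | hμ
    · obtain ⟨k, hk1, hkr, hlo, hhi⟩ := cover (SpF c) r μ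
        (by simp only [SpF_zero]; omega) (by omega)
      have hSqk : SqF c (k-1) ≤ SqF c r := SqF_mono c (by omega)
      rcases le_or_gt ν (n' + SqF c (k-1)) with hν | hν
      · exact absurd h5 (hgt μ ν (n' + SqF c (k-1) + 1) (by omega) (by omega)
          (L1 k hk1 hkr μ hlo hhi))
      · constructor
        · obtain ⟨l, hl1, hlr, hνlo, hνhi⟩ := cover (fun k => n' + SqF c k) r ν
            (show n' + SqF c 0 < ν by rw [SqF_zero]; omega)
            (show ν ≤ n' + SqF c r by omega)
          replace hνlo : n' + SqF c (l-1) < ν := hνlo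
          replace hνhi : ν ≤ n' + SqF c l := hνhi
          have hkl : k ≤ l := by
            by_contra hcon
            push_neg at hcon
            have := SqF_mono c (show l ≤ k-1 by omega)
            omega
          have hSpkl : SpF c k ≤ SpF c l := SpF_mono c hkl
          have hidl := (hcIdf l hlr).1
          have hidl1 := (hcIdf l hlr).2 hl1
          have hc2lmn : c (2*l) ≤ m + n := by
            have := hcmono (2*l) (2*r) (by omega) le_rfl
            omega
          rw [Afun, haval'' l hl1 hlr ν hνlo hνhi]
          have h6 : e (μ + ν) ≤ e (ν + SpF c l) := he _ _ (by omega) (by omega) (by omega)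
          have h7 : e (ν + SpF c l) ≤ αt'' l (ν + SpF c l) :=
            (hα''D l hl1 hlr).2.1 _ (by omega) (by omega)
          linarith
        · have hid1 := (hcIdf k hkr).2 hk1
          have hid2 : c (2*k-2) = n' + SpF c (k-1) + SqF c (k-1) := by
            have := (hcIdf (k-1) (by omega)).1
            rwa [show 2*(k-1) = 2*k-2 by omega] at this
          have hc2kmn : c (2*k-1) ≤ m + n := by
            have := hcmono (2*k-1) (2*r) (by omega) le_rfl
            omega
          rw [Bfun, hbval'' k hk1 hkr μ hlo hhi]
          have h6 : βt'' k (μ + (n' + SqF c (k-1))) ≤ e (μ + (n' + SqF c (k-1))) :=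
            (hβ''D k hk1 hkr).2.1 _ (by omega) (by omega)
          have h7 : e (μ + (n' + SqF c (k-1))) ≤ e (μ + ν - 1) :=
            he _ _ (by omega) (by omega) (by omega)
          linarith
    · exact absurd h5 (hgt μ ν (n+1) (by omega) le_rfl (le_of_eq (L2 μ hμ h2).symm))
  · -- MoreBal
    have hDsum : ∀ j : ℕ, (∑ l' ∈ Icc 1 j, (D l' - (δ l' : ℤ)))
        = if j = 0 then 0 else if j < i0 then 1 else 0 := by
      intro j
      induction j with
      | zero => simp
      | succ j ih =>
        rw [Finset.sum_Icc_succ_top (by omega : 1 ≤ j+1), ih]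
        have hval : D (j+1) - ((δ (j+1) : ℤ))
            = if j+1 = 1 then 1 else if j+1 = i0 then -1 else 0 := by
          by_cases e1 : j+1 = 1
          · rw [e1, hD1, if_pos rfl]
            ring
          · by_cases e2 : j+1 = i0
            · rw [e2, hDi0, if_neg (by omega), if_pos rfl]
              ring
            · rw [hDother _ e1 e2, if_neg e1, if_neg e2]
              ring
        rw [hval]
        split_ifs <;> first | omega | exact (‹False›).elim
    intro k0 hk0
    rcases le_or_gt k0 n' with h | h
    · refine le_of_eq (Finset.sum_congr rfl ?_)
      intro i hi
      simp only [Finset.mem_Icc] at hi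
      rw [hapre i hi.1 (by omega), hapre'' i hi.1 (by omega)]
    · obtain ⟨l, hl1, hlr, hlo, hhi⟩ := cover (fun k => n' + SqF c k) r k0
        (show n' + SqF c 0 < k0 by rw [SqF_zero]; omega)
        (show k0 ≤ n' + SqF c r by omega)
      replace hlo : n' + SqF c (l-1) < k0 := hlo
      replace hhi : k0 ≤ n' + SqF c l := hhi
      rw [hIcc1 k0]
      have hs'' : ∑ i ∈ Ioc 0 k0, a'' i = (∑ i ∈ Ioc 0 (n' + SqF c (l-1)), a'' i)
          + ∑ i ∈ Ioc (n' + SqF c (l-1)) k0, a'' i :=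
        (Finset.sum_Ioc_consecutive a'' (by omega) (by omega)).symm
      have hs : ∑ i ∈ Ioc 0 k0, a i = (∑ i ∈ Ioc 0 (n' + SqF c (l-1)), a i)
          + ∑ i ∈ Ioc (n' + SqF c (l-1)) k0, a i :=
        (Finset.sum_Ioc_consecutive a (by omega) (by omega)).symm
      have hblk'' : ∑ i ∈ Ioc (n' + SqF c (l-1)) k0, a'' i
          = ∑ j ∈ Ioc (c (2*l-1)) (k0 + SpF c l), αt'' l j :=
        blockA c n' r hc0 hcstep a'' αt'' haQ''f l hl1 hlr k0 hhi
      have hblk : ∑ i ∈ Ioc (n' + SqF c (l-1)) k0, a i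
          = ∑ j ∈ Ioc (c (2*l-1)) (k0 + SpF c l), αt l j :=
        blockA c n' r hc0 hcstep a αt haQf l hl1 hlr k0 hhi
      have hPA2'' := PA'' (l-1) (by omega)
      have hPA2 := PA (l-1) (by omega)
      have hoffD : (∑ l' ∈ Icc 1 (l-1), ((∑ j ∈ Ioc (c (2*l'-1)) (c (2*l')), e j) + D l'))
          - (∑ l' ∈ Icc 1 (l-1), ((∑ j ∈ Ioc (c (2*l'-1)) (c (2*l')), e j) + (δ l' : ℤ)))
          = ∑ l' ∈ Icc 1 (l-1), (D l' - (δ l' : ℤ)) := by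
        rw [← Finset.sum_sub_distrib]
        refine Finset.sum_congr rfl ?_
        intro x _
        ring
      have hidl := (hcIdf l hlr).1
      have hidl1 := (hcIdf l hlr).2 hl1
      have hlohi : c (2*l-1) + 1 ≤ c (2*l) := by
        have := hcstep (2*l-1) (by omega)
        omega
      have hc2lmn : c (2*l) ≤ m + n := by
        have := hcmono (2*l) (2*r) (by omega) le_rfl
        omega
      have hIoc_eq : Ioc (c (2*l-1)) (k0 + SpF c l) = Icc (c (2*l-1)+1) (k0 + SpF c l) :=
        (Finset.Icc_add_one_left_eq_Ioc _ _).symm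
      have hcmp : (∑ j ∈ Ioc (c (2*l-1)) (k0 + SpF c l), αt l j)
          ≤ (∑ j ∈ Ioc (c (2*l-1)) (k0 + SpF c l), αt'' l j) + (if l = i0 then 1 else 0) := by
        rw [hIoc_eq]
        by_cases hli : l = i0
        · rw [if_pos hli]
          have hdl : 1 ≤ δ l := by rw [hli]; exact hδ
          have ht : IsAlphaBlock e (c (2*l-1)+1) (c (2*l)) (((δ l : ℤ) - 1) + 1) (αt l) := by
            have h9 := hα l hl1 hlr
            rwa [show ((δ l : ℤ) - 1) + 1 = (δ l : ℤ) by ring]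
          have hDl : D l = (δ l : ℤ) - 1 := by rw [hli, hDi0]
          have ht'' : IsAlphaBlock e (c (2*l-1)+1) (c (2*l)) ((δ l : ℤ) - 1) (αt'' l) := by
            have h9 := hα''D l hl1 hlr
            rwa [hDl] at h9
          exact alpha_prefix_down e (αt l) (αt'' l) _ _ ((δ l : ℤ) - 1)
            (by omega) hlohi
            (fun u v h1 h2 h3 => he u v (by omega) h2 (by omega)) ht ht''
            (k0 + SpF c l) (by omega) (by omega)
        · rw [if_neg hli, add_zero]
          by_cases hl1' : l = 1
          · have hDl : D l = (δ l : ℤ) + 1 := by rw [hl1', hD1]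
            have ht'' : IsAlphaBlock e (c (2*l-1)+1) (c (2*l)) ((δ l : ℤ) + 1) (αt'' l) := by
              have h9 := hα''D l hl1 hlr
              rwa [hDl] at h9
            exact alpha_prefix_mono e (αt l) (αt'' l) _ _ (δ l : ℤ) hlohi
              (hα l hl1 hlr) ht'' (k0 + SpF c l) (by omega) (by omega)
          · have hDl : D l = (δ l : ℤ) := hDother l hl1' hli
            have ht'' := hα''D l hl1 hlr
            rw [hDl] at ht''
            have htt := hα l hl1 hlr
            exact ht''.2.2.2 (αt l) htt.1 htt.2.1 htt.2.2.1 (k0 + SpF c l) (by omega) (by omega)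
      have hOC : (if l = i0 then 1 else 0 : ℤ) ≤ ∑ l' ∈ Icc 1 (l-1), (D l' - (δ l' : ℤ)) := by
        rw [hDsum (l-1)]
        split_ifs <;> omega
      linarith
  · -- strictness
    by_contra hcon
    push_neg at hcon
    have h00 := SqF_zero c
    have hSq1 : 1 ≤ SqF c 1 := by
      have h1 : SqF c 1 = c (2*1) - c (2*1-1) := by simp [SqF]
      have h2 := hcstep (2*1-1) (by omega)
      rw [show 2*1-1+1 = 2*1 by norm_num] at h2
      omega
    have hSq1r : SqF c 1 ≤ SqF c r := SqF_mono c hr1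
    have hid1 := (hcIdf 1 hr1).1
    have hblk1'' := blockA c n' r hc0 hcstep a'' αt'' haQ''f 1 le_rfl hr1
      (n' + SqF c 1) le_rfl
    have hblk1 := blockA c n' r hc0 hcstep a αt haQf 1 le_rfl hr1
      (n' + SqF c 1) le_rfl
    rw [show (1:ℕ)-1 = 0 by norm_num,
      show (n' + SqF c 1) + SpF c 1 = c (2*1) by omega] at hblk1'' hblk1
    have hS'' := hsumA'' 1 le_rfl hr1
    have hS := hsumA 1 le_rfl hr1
    have hEq : ∑ i ∈ Ioc (n' + SqF c 0) (n' + SqF c 1), a'' i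
        = ∑ i ∈ Ioc (n' + SqF c 0) (n' + SqF c 1), a i := by
      refine Finset.sum_congr rfl ?_
      intro i hi
      simp only [Finset.mem_Ioc] at hi
      exact hcon i (by omega) (by omega)
    rw [hblk1'', hS''] at hEq
    rw [hblk1, hS] at hEq
    rw [hD1] at hEq
    linarith
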